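/- Let X be a real random variable with mean 0, positive finite variance σ², and moment generating function φ₀ finite on [0,∞). Let γ ≥ 1 and k_γ(u) = γ(1−u)^{γ−1} for u ∈ [0,1). Define J₀(a) = sup_{λ>0} ( aλ − ∫₀¹ log φ₀(λ k_γ(u)) du ). Then J₀(x) > 0 for every x > 0. -/

import Mathlib

open MeasureTheory

private lemma sq_le_four_exp' {x : ℝ} (hx : 0 ≤ x) : x ^ 2 ≤ 4 * Real.exp x := by
  have h := Real.add_one_le_exp (x / 2)
  have h2 : Real.exp (x / 2) * Real.exp (x / 2) = Real.exp x := by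
    rw [← Real.exp_add]; ring_nf
  nlinarith [Real.exp_pos (x / 2)]

private lemma exp_quad_bound' {y : ℝ} (hy : |y| ≤ 1) :
    Real.exp y ≤ 1 + y + y ^ 2 := by
  have h := Real.exp_bound hy (n := 2) (by norm_num)
  simp [Finset.sum_range_succ] at h
  rw [abs_le] at h
  nlinarith [sq_abs y, sq_nonneg y]

private lemma key_exp_bound (t x : ℝ) (ht0 : 0 ≤ t) (ht1 : t ≤ 1) :
    Real.exp (t * x) ≤ 1 + t * x + t ^ 2 * (3 * x ^ 2 + 4 * Real.exp (4 * x)) := by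
  rcases le_or_gt (|t * x|) 1 with h | h
  · have hb := exp_quad_bound' h
    nlinarith [Real.exp_pos (4 * x), sq_nonneg (t * x), sq_nonneg x]
  · rcases le_or_gt (t * x) 0 with hneg | hpos
    · have h1 : t * x < -1 := by rcases abs_cases (t * x) with ⟨he, _⟩ | ⟨he, _⟩ <;> linarith
      have h2 : Real.exp (t * x) ≤ 1 := Real.exp_le_one_iff.mpr (by linarith)
      have h3 : (t * x) ^ 2 ≥ -(t * x) := by nlinarith
      nlinarith [Real.exp_pos (4 * x), sq_nonneg x]
    · have h1 : 1 < t * x := by rcases abs_cases (t * x) with ⟨he, _⟩ | ⟨he, _⟩ <;> linarith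
      have hx0 : 0 < x := by
        by_contra hc
        push_neg at hc
        nlinarith
      have htx : t * x ≤ x := by nlinarith
      have hA : Real.exp (t * x) ≤ Real.exp x := Real.exp_le_exp.mpr htx
      have hB : x ^ 2 * Real.exp x ≤ 4 * Real.exp (4 * x) := by
        have h5 : x ^ 2 ≤ 4 * Real.exp x := sq_le_four_exp' hx0.le
        have h6 : Real.exp x * Real.exp x = Real.exp (2 * x) := by rw [← Real.exp_add]; ring_nf
        have h7 : Real.exp (2 * x) ≤ Real.exp (4 * x) := Real.exp_le_exp.mpr (by linarith)
        nlinarith [Real.exp_pos x]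
      have hC : 1 ≤ t ^ 2 * x ^ 2 := by nlinarith
      have hD : Real.exp x ≤ 4 * t ^ 2 * Real.exp (4 * x) := by
        have h8 := mul_le_mul_of_nonneg_left hB (by positivity : (0:ℝ) ≤ t ^ 2)
        nlinarith [Real.exp_pos x, Real.exp_pos (4 * x)]
      nlinarith [Real.exp_pos (4 * x), sq_nonneg x]

/-- Positivity of `J₀` on the positive half-line:
`J₀(x) = sup_{λ>0} (xλ - ∫₀¹ log φ₀(λ k_γ(u)) du) > 0` for `x > 0`,
equivalently, for every `x > 0` there is `λ > 0` making the expression positive. -/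
theorem stmt6 {Ω : Type*} [MeasurableSpace Ω] (μ : Measure Ω) [IsProbabilityMeasure μ]
    (X : Ω → ℝ) (hX : Measurable X) (σ2 : ℝ) (hσ2 : 0 < σ2)
    (hmean : ∫ ω, X ω ∂μ = 0) (hvar : ∫ ω, (X ω) ^ 2 ∂μ = σ2)
    (hX2 : Integrable (fun ω => (X ω) ^ 2) μ)
    (hfin : ∀ l, 0 ≤ l → Integrable (fun ω => Real.exp (l * X ω)) μ)
    (γ : ℝ) (hγ : 1 ≤ γ)
    (φ₀ : ℝ → ℝ) (hφ₀ : ∀ l, φ₀ l = ∫ ω, Real.exp (l * X ω) ∂μ)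
    (k : ℝ → ℝ) (hk : ∀ u, k u = if u < 1 then γ * (1 - u) ^ (γ - 1) else 0) :
    ∀ x : ℝ, 0 < x → ∃ l : ℝ, 0 < l ∧
      0 < x * l - ∫ u in Set.Ioo (0 : ℝ) 1, Real.log (φ₀ (l * k u)) := by
  intro x hx
  have hγ0 : (0:ℝ) < γ := lt_of_lt_of_le one_pos hγ
  -- integrability of X
  have hXint : Integrable X μ := by
    refine ((integrable_const (1:ℝ)).add hX2).mono' hX.aestronglyMeasurable (ae_of_all _ ?_)
    intro ω
    simp only [Pi.add_apply]
    rw [Real.norm_eq_abs]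
    nlinarith [sq_nonneg (|X ω| - 1), sq_abs (X ω), abs_nonneg (X ω)]
  have hg : Integrable (fun ω => 3 * (X ω) ^ 2 + 4 * Real.exp (4 * X ω)) μ :=
    (hX2.const_mul 3).add ((hfin 4 (by norm_num)).const_mul 4)
  set C : ℝ := ∫ ω, (3 * (X ω) ^ 2 + 4 * Real.exp (4 * X ω)) ∂μ with hC
  have hCnn : 0 ≤ C := by
    apply integral_nonneg
    intro ω
    positivity
  -- lower bound for φ₀
  have hphi1 : ∀ t : ℝ, 0 ≤ t → 1 ≤ φ₀ t := by
    intro t ht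
    rw [hφ₀]
    have hi1 : Integrable (fun ω => 1 + t * X ω) μ := by
      have := (integrable_const (1:ℝ)).add (hXint.const_mul t)
      simpa using this
    have hmono := integral_mono hi1 (hfin t ht) (fun ω => by
      have := Real.add_one_le_exp (t * X ω)
      simp only []
      linarith)
    rw [integral_add (integrable_const (1:ℝ)) (hXint.const_mul t), integral_const,
      integral_const_mul, hmean] at hmono
    simpa using hmono
  -- upper bound for φ₀
  have hphile : ∀ t : ℝ, 0 ≤ t → t ≤ 1 → φ₀ t ≤ 1 + C * t ^ 2 := by
    intro t ht0 ht1
    rw [hφ₀]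
    have hi1 : Integrable (fun ω => 1 + t * X ω) μ := by
      have := (integrable_const (1:ℝ)).add (hXint.const_mul t)
      simpa using this
    have hi2 : Integrable (fun ω => t ^ 2 * (3 * (X ω) ^ 2 + 4 * Real.exp (4 * X ω))) μ :=
      hg.const_mul (t ^ 2)
    have hint1 : Integrable
        (fun ω => 1 + t * X ω + t ^ 2 * (3 * (X ω) ^ 2 + 4 * Real.exp (4 * X ω))) μ := by
      have := hi1.add hi2
      exact this
    have hmono := integral_mono (hfin t ht0) hint1
      (fun ω => key_exp_bound t (X ω) ht0 ht1)
    rw [integral_add hi1 hi2,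
      integral_add (integrable_const (1:ℝ)) (hXint.const_mul t), integral_const,
      integral_const_mul, integral_const_mul, hmean] at hmono
    simp only [measure_univ, probReal_univ, ENNReal.toReal_one, one_smul, mul_zero, add_zero] at hmono
    rw [← hC] at hmono
    linarith
  -- choice of l
  set D : ℝ := C * γ ^ 2 + 1 with hD
  have hD0 : 0 < D := by positivity
  set l : ℝ := min (1 / γ) (x / (2 * D)) with hl
  have hl0 : 0 < l := lt_min (by positivity) (by positivity)
  have hlγ : l * γ ≤ 1 := by
    have h1 : l ≤ 1 / γ := min_le_left _ _
    calc l * γ ≤ 1 / γ * γ := mul_le_mul_of_nonneg_right h1 hγ0.le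
    _ = 1 := by field_simp
  refine ⟨l, hl0, ?_⟩
  -- pointwise bounds on the integrand
  have hbnd : ∀ u ∈ Set.Ioo (0:ℝ) 1,
      0 ≤ Real.log (φ₀ (l * k u)) ∧ Real.log (φ₀ (l * k u)) ≤ C * γ ^ 2 * l ^ 2 := by
    intro u hu
    have hku : k u = γ * (1 - u) ^ (γ - 1) := by rw [hk u, if_pos hu.2]
    have hk0 : 0 ≤ k u := by
      rw [hku]
      have := Real.rpow_nonneg (by linarith [hu.2] : (0:ℝ) ≤ 1 - u) (γ - 1)
      positivity
    have hkγ : k u ≤ γ := by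
      rw [hku]
      have h1 : (1 - u) ^ (γ - 1) ≤ 1 :=
        Real.rpow_le_one (by linarith [hu.2]) (by linarith [hu.1]) (by linarith)
      nlinarith
    have ht0 : 0 ≤ l * k u := mul_nonneg hl0.le hk0
    have htlγ : l * k u ≤ l * γ := by nlinarith
    have ht1 : l * k u ≤ 1 := le_trans htlγ hlγ
    have h1 := hphi1 (l * k u) ht0
    constructor
    · exact Real.log_nonneg h1
    · have h2 := hphile (l * k u) ht0 ht1
      have h3 := Real.log_le_sub_one_of_pos (by linarith : (0:ℝ) < φ₀ (l * k u))
      have h4 : (l * k u) ^ 2 ≤ (l * γ) ^ 2 := by nlinarith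
      calc Real.log (φ₀ (l * k u)) ≤ φ₀ (l * k u) - 1 := h3
      _ ≤ C * (l * k u) ^ 2 := by linarith
      _ ≤ C * (l * γ) ^ 2 := by nlinarith
      _ = C * γ ^ 2 * l ^ 2 := by ring
  -- bound the integral
  have hIle : (∫ u in Set.Ioo (0:ℝ) 1, Real.log (φ₀ (l * k u)))
      ≤ C * γ ^ 2 * l ^ 2 := by
    have h1 : (∫ u in Set.Ioo (0:ℝ) 1, Real.log (φ₀ (l * k u)))
        ≤ ∫ _u in Set.Ioo (0:ℝ) 1, C * γ ^ 2 * l ^ 2 := by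
      apply integral_mono_of_nonneg
      · filter_upwards [ae_restrict_mem measurableSet_Ioo] with u hu
        exact (hbnd u hu).1
      · exact integrableOn_const (by simp [Real.volume_Ioo])
      · filter_upwards [ae_restrict_mem measurableSet_Ioo] with u hu
        exact (hbnd u hu).2
    calc (∫ u in Set.Ioo (0:ℝ) 1, Real.log (φ₀ (l * k u)))
        ≤ ∫ _u in Set.Ioo (0:ℝ) 1, C * γ ^ 2 * l ^ 2 := h1
    _ = C * γ ^ 2 * l ^ 2 := by simp [Real.volume_Ioo]
  -- conclude
  have hlx : D * l ≤ x / 2 := by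
    have h1 : l ≤ x / (2 * D) := min_le_right _ _
    calc D * l ≤ D * (x / (2 * D)) := by nlinarith
    _ = x / 2 := by field_simp
  have h2 : C * γ ^ 2 * l ^ 2 ≤ D * l * l := by nlinarith
  nlinarith
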